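/- Let n, m, k be positive integers with m ≥ 2. Then the sum of all digits in the base-m expansion of (m^k − 1)·n is at least k·(m − 1). -/

import Mathlib

open Finset

/-- The Legendre-type identity, extended to any sufficiently large range. -/
lemma sum_div_pow_eq (m x M : ℕ) (hM : Nat.log m x + 1 ≤ M) (hm : 2 ≤ m) :
    (m - 1) * ∑ i ∈ range M, x / m ^ (i + 1) = x - (Nat.digits m x).sum := by
  rw [← Nat.sub_one_mul_sum_log_div_pow_eq_sub_sum_digits x]
  congr 1
  refine (Finset.sum_subset (by simp; omega) (fun i _ hi => ?_)).symm
  simp only [mem_range, not_lt] at hi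
  apply Nat.div_eq_of_lt
  calc x < m ^ (Nat.log m x + 1) := Nat.lt_pow_succ_log_self (by omega) x
    _ ≤ m ^ (i + 1) := Nat.pow_le_pow_right (by omega) (by omega)

/-- For positive integers `n, m, k` with `m ≥ 2`, the sum of all digits in the
base-`m` expansion of `(m^k - 1)·n` is at least `k·(m - 1)`. -/
theorem digit_sum_ge (n m k : ℕ) (hn : 0 < n) (hm : 2 ≤ m) (hk : 0 < k) :
    k * (m - 1) ≤ (Nat.digits m ((m ^ k - 1) * n)).sum := by
  set N := (m ^ k - 1) * n with hN
  have hpk : 1 ≤ m ^ k := Nat.one_le_pow _ _ (by omega)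
  have hNn : N + n = m ^ k * n := by
    rw [hN, Nat.sub_mul, one_mul, Nat.sub_add_cancel (Nat.le_mul_of_pos_left n (by omega))]
  -- digit sum of m^k * n equals that of n
  have hS : (Nat.digits m (N + n)).sum = (Nat.digits m n).sum := by
    rw [hNn, Nat.digits_base_pow_mul (by omega) hn]
    simp
  -- find j with m^j ∣ n, ¬ m^(j+1) ∣ n
  have hex : ∃ i, ¬ m ^ i ∣ n := by
    refine ⟨n, fun hdvd => ?_⟩
    have h1 : m ^ n ≤ n := Nat.le_of_dvd hn hdvd
    have h2 : n < m ^ n := Nat.lt_pow_self (by omega)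
    omega
  classical
  have hfind1 : 1 ≤ Nat.find hex := by
    rcases Nat.eq_zero_or_pos (Nat.find hex) with h | h
    · exfalso; have := Nat.find_spec hex; rw [h] at this; simp at this
    · exact h
  set j := Nat.find hex - 1 with hj
  have hjdvd : m ^ j ∣ n := by
    by_contra hcon
    have h1 : Nat.find hex ≤ j := Nat.find_le hcon
    omega
  have hjnot : ¬ m ^ (j + 1) ∣ n := by
    have : j + 1 = Nat.find hex := by omega
    rw [this]; exact Nat.find_spec hex
  -- choose M large enough
  set M := Nat.log m (N + n) + 1 + (j + k) with hM
  have hlog : ∀ x, x ≤ N + n → Nat.log m x + 1 ≤ M := fun x hx => by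
    have := Nat.log_mono_right (b := m) hx; omega
  have idN := sum_div_pow_eq m N M (hlog N (by omega)) hm
  have idn := sum_div_pow_eq m n M (hlog n (by omega)) hm
  have idNn := sum_div_pow_eq m (N + n) M (hlog (N + n) le_rfl) hm
  -- cast to ℤ
  have hle : ∀ x : ℕ, (Nat.digits m x).sum ≤ x := fun x => Nat.digit_sum_le m x
  set SN := (Nat.digits m N).sum with hSN
  set Sn := (Nat.digits m n).sum with hSn
  have hm1 : (1 : ℕ) ≤ m := by omega
  have idN' : ((m : ℤ) - 1) * ∑ i ∈ range M, ((N / m ^ (i + 1) : ℕ) : ℤ) = (N : ℤ) - SN := by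
    calc ((m : ℤ) - 1) * ∑ i ∈ range M, ((N / m ^ (i + 1) : ℕ) : ℤ)
        = (((m - 1) * ∑ i ∈ range M, N / m ^ (i + 1) : ℕ) : ℤ) := by
          rw [Nat.cast_mul, Nat.cast_sum, Nat.cast_sub hm1, Nat.cast_one]
      _ = ((N - SN : ℕ) : ℤ) := by rw [idN]
      _ = (N : ℤ) - SN := by rw [Nat.cast_sub (hle N)]
  have idn' : ((m : ℤ) - 1) * ∑ i ∈ range M, ((n / m ^ (i + 1) : ℕ) : ℤ) = (n : ℤ) - Sn := by
    calc ((m : ℤ) - 1) * ∑ i ∈ range M, ((n / m ^ (i + 1) : ℕ) : ℤ)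
        = (((m - 1) * ∑ i ∈ range M, n / m ^ (i + 1) : ℕ) : ℤ) := by
          rw [Nat.cast_mul, Nat.cast_sum, Nat.cast_sub hm1, Nat.cast_one]
      _ = ((n - Sn : ℕ) : ℤ) := by rw [idn]
      _ = (n : ℤ) - Sn := by rw [Nat.cast_sub (hle n)]
  have idNn' : ((m : ℤ) - 1) * ∑ i ∈ range M, (((N + n) / m ^ (i + 1) : ℕ) : ℤ)
      = ((N : ℤ) + n) - Sn := by
    calc ((m : ℤ) - 1) * ∑ i ∈ range M, (((N + n) / m ^ (i + 1) : ℕ) : ℤ)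
        = (((m - 1) * ∑ i ∈ range M, (N + n) / m ^ (i + 1) : ℕ) : ℤ) := by
          rw [Nat.cast_mul, Nat.cast_sum, Nat.cast_sub hm1, Nat.cast_one]
      _ = ((N + n - (Nat.digits m (N + n)).sum : ℕ) : ℤ) := by rw [idNn]
      _ = ((N : ℤ) + n) - Sn := by
          rw [Nat.cast_sub (hle (N + n)), hS, Nat.cast_add]
  -- the carry terms
  set c : ℕ → ℤ := fun i =>
    (((N + n) / m ^ (i + 1) : ℕ) : ℤ) - (N / m ^ (i + 1) : ℕ) - (n / m ^ (i + 1) : ℕ) with hc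
  have hc0 : ∀ i, 0 ≤ c i := by
    intro i
    have : N / m ^ (i + 1) + n / m ^ (i + 1) ≤ (N + n) / m ^ (i + 1) := by
      rw [Nat.le_div_iff_mul_le (Nat.pow_pos (by omega))]
      have h1 := Nat.div_mul_le_self N (m ^ (i + 1))
      have h2 := Nat.div_mul_le_self n (m ^ (i + 1))
      rw [add_mul]; omega
    have h3 : ((N / m ^ (i + 1) : ℕ) : ℤ) + ((n / m ^ (i + 1) : ℕ) : ℤ)
        ≤ (((N + n) / m ^ (i + 1) : ℕ) : ℤ) := by exact_mod_cast this
    simp only [hc]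
    omega
  have hc1 : ∀ i ∈ Finset.Ico j (j + k), 1 ≤ c i := by
    intro i hi
    rw [Finset.mem_Ico] at hi
    set d := m ^ (i + 1) with hd
    have hdpos : 0 < d := Nat.pow_pos (by omega)
    have hdvdNn : d ∣ N + n := by
      rw [hNn]
      obtain ⟨n', hn'⟩ := hjdvd
      rw [hn', ← mul_assoc, ← pow_add]
      exact Dvd.dvd.mul_right (pow_dvd_pow m (by omega)) n'
    have hnr : n % d ≠ 0 := by
      intro h0
      exact hjnot (dvd_trans (pow_dvd_pow m (by omega)) (Nat.dvd_of_mod_eq_zero h0))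
    have key : N / d + n / d + 1 ≤ (N + n) / d := by
      rw [Nat.le_div_iff_mul_le hdpos]
      have h1 := Nat.div_add_mod N d
      have h2 := Nat.div_add_mod n d
      have h3 : d ∣ N % d + n % d := by
        have heq : N % d + n % d = (N + n) - d * (N / d) - d * (n / d) := by omega
        rw [heq]
        exact Nat.dvd_sub (Nat.dvd_sub hdvdNn (dvd_mul_right d _)) (dvd_mul_right d _)
      have h4 : d ≤ N % d + n % d := Nat.le_of_dvd (by omega) h3
      have h5 : (N / d + n / d + 1) * d = d * (N / d) + d * (n / d) + d := by ring
      omega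
    simp only [hc, ← hd]
    have : ((N / d : ℕ) : ℤ) + (n / d : ℕ) + 1 ≤ ((N + n) / d : ℕ) := by exact_mod_cast key
    omega
  have hsum : (k : ℤ) ≤ ∑ i ∈ range M, c i := by
    have hsub : Finset.Ico j (j + k) ⊆ range M := by
      intro i hi; rw [Finset.mem_Ico] at hi; rw [mem_range]; omega
    calc (k : ℤ) = ∑ _i ∈ Finset.Ico j (j + k), (1 : ℤ) := by
          rw [Finset.sum_const, Nat.card_Ico, Nat.add_sub_cancel_left, nsmul_eq_mul, mul_one]
      _ ≤ ∑ i ∈ Finset.Ico j (j + k), c i := Finset.sum_le_sum hc1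
      _ ≤ ∑ i ∈ range M, c i :=
          Finset.sum_le_sum_of_subset_of_nonneg hsub (fun i _ _ => hc0 i)
  have hmain : ((m : ℤ) - 1) * ∑ i ∈ range M, c i = SN := by
    simp only [hc]
    rw [Finset.sum_sub_distrib, Finset.sum_sub_distrib, mul_sub, mul_sub, idN', idn', idNn']
    ring
  have hfin : (k : ℤ) * ((m : ℤ) - 1) ≤ SN := by
    rw [← hmain]
    have hm1 : (0 : ℤ) ≤ (m : ℤ) - 1 := by
      have : (2 : ℤ) ≤ m := by exact_mod_cast hm
      omega
    calc (k : ℤ) * ((m : ℤ) - 1) ≤ (∑ i ∈ range M, c i) * ((m : ℤ) - 1) :=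
          mul_le_mul_of_nonneg_right hsum hm1
      _ = ((m : ℤ) - 1) * ∑ i ∈ range M, c i := by ring
  have : ((k * (m - 1) : ℕ) : ℤ) ≤ (SN : ℤ) := by
    push_cast [Nat.cast_sub (show 1 ≤ m by omega)]
    exact hfin
  exact_mod_cast this
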